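/- For any compact subset K of ℂ ∖ ℕ₀ there exist constants c, C > 0 such that c^n · n! ≤ |z·(z-1)···(z-n+1)| ≤ C^n · n! for all z ∈ K and all n ∈ ℕ₀. -/

import Mathlib

open scoped BigOperators

/-- For any compact subset `K` of `ℂ ∖ ℕ₀` there exist constants
`c, C > 0` such that `c^n · n! ≤ |z(z-1)⋯(z-n+1)| ≤ C^n · n!` for all `z ∈ K` and all
`n ∈ ℕ₀`, where `z^(↓n) = ∏_{j=0}^{n-1}(z - j)` is the falling factorial. -/
theorem falling_factorial_bounds_on_compact (K : Set ℂ) (hK : IsCompact K)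
    (hKnat : ∀ z ∈ K, ∀ n : ℕ, z ≠ (n : ℂ)) :
    ∃ c C : ℝ, 0 < c ∧ 0 < C ∧
      ∀ z ∈ K, ∀ n : ℕ,
        c ^ n * n.factorial ≤ ‖∏ j ∈ Finset.range n, (z - (j : ℂ))‖ ∧
        ‖∏ j ∈ Finset.range n, (z - (j : ℂ))‖ ≤ C ^ n * n.factorial := by
  rcases K.eq_empty_or_nonempty with hKe | hne
  · exact ⟨1, 1, one_pos, one_pos, fun z hz => by simp [hKe] at hz⟩
  -- bound M on |z|
  obtain ⟨z₀, hz₀K, hz₀'⟩ := hK.exists_isMaxOn hne continuous_norm.continuousOn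
  have hz₀ : ∀ z ∈ K, ‖z‖ ≤ ‖z₀‖ := hz₀'
  set M : ℝ := ‖z₀‖ with hMdef
  have hM0 : 0 ≤ M := norm_nonneg _
  have hM : ∀ z ∈ K, ‖z‖ ≤ M := hz₀
  -- positive lower distances to each natural number
  have key : ∀ j : ℕ, ∃ d : ℝ, 0 < d ∧ ∀ z ∈ K, d ≤ ‖z - j‖ := by
    intro j
    obtain ⟨w, hwK, hw'⟩ := hK.exists_isMinOn hne
      ((continuous_norm.comp (continuous_sub_right (j : ℂ)))).continuousOn
    have hw : ∀ z ∈ K, ‖w - j‖ ≤ ‖z - j‖ := hw'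
    refine ⟨‖w - j‖, ?_, hw⟩
    exact norm_pos_iff.mpr (sub_ne_zero.mpr (hKnat w hwK j))
  choose d hd hdle using key
  set N : ℕ := ⌈2 * M⌉₊ with hNdef
  have hNM : 2 * M ≤ N := Nat.le_ceil _
  have hrne : (Finset.range (N + 1)).Nonempty := ⟨0, by simp⟩
  set D : ℝ := (Finset.range (N + 1)).inf' hrne d with hDdef
  have hD0 : 0 < D := by
    rw [hDdef, Finset.lt_inf'_iff]
    exact fun j _ => hd j
  set c : ℝ := min (1 / 2) (D / (N + 1)) with hcdef
  have hc0 : 0 < c := lt_min (by norm_num) (div_pos hD0 (by positivity))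
  refine ⟨c, M + 1, hc0, by linarith, fun z hz n => ?_⟩
  have hzM := hM z hz
  have hfac : (n.factorial : ℝ) = ∏ j ∈ Finset.range n, ((j : ℝ) + 1) := by
    induction n with
    | zero => simp
    | succ m ih => rw [Finset.prod_range_succ, ← ih, Nat.factorial_succ]; push_cast; ring
  have habs : ‖∏ j ∈ Finset.range n, (z - (j : ℂ))‖
      = ∏ j ∈ Finset.range n, ‖z - (j : ℂ)‖ := norm_prod _ _
  constructor
  · -- lower bound
    have hlow : ∀ j : ℕ, ∀ z ∈ K, c * ((j : ℝ) + 1) ≤ ‖z - j‖ := by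
      intro j z hz
      rcases le_or_gt j N with hj | hj
      · calc c * ((j : ℝ) + 1) ≤ (D / (N + 1)) * ((N : ℝ) + 1) := by
              have hjN : (j : ℝ) ≤ N := Nat.cast_le.mpr hj
              exact mul_le_mul (min_le_right _ _) (by linarith) (by positivity) (by positivity)
          _ = D := by field_simp
          _ ≤ d j := Finset.inf'_le d (Finset.mem_range.mpr (Nat.lt_succ_of_le hj))
          _ ≤ ‖z - j‖ := hdle j z hz
      · have hjM : 2 * M + 1 ≤ (j : ℝ) := by
          have : (N : ℝ) + 1 ≤ j := by exact_mod_cast hj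
          linarith
        calc c * ((j : ℝ) + 1) ≤ (1 / 2) * ((j : ℝ) + 1) := by
              apply mul_le_mul_of_nonneg_right (min_le_left _ _) (by positivity)
          _ ≤ (j : ℝ) - M := by linarith
          _ ≤ ‖(j : ℂ)‖ - ‖z‖ := by
              simp only [Complex.norm_natCast]
              linarith [hM z hz]
          _ ≤ ‖(j : ℂ) - z‖ := by
              exact norm_sub_norm_le ((j : ℂ)) z
          _ = ‖z - j‖ := by rw [norm_sub_rev]
    have hrw : c ^ n * ∏ j ∈ Finset.range n, ((j : ℝ) + 1)
        = ∏ j ∈ Finset.range n, (c * ((j : ℝ) + 1)) := by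
      rw [Finset.prod_mul_distrib, Finset.prod_const, Finset.card_range]
    rw [habs, hfac, hrw]
    exact Finset.prod_le_prod (fun j _ => by positivity) (fun j _ => hlow j z hz)
  · have hup : ∀ j : ℕ, ‖z - j‖ ≤ (M + 1) * ((j : ℝ) + 1) := by
      intro j
      calc ‖z - j‖ ≤ ‖z‖ + ‖(j : ℂ)‖ :=
            norm_sub_le z j
        _ ≤ M + j := by simp only [Complex.norm_natCast]; linarith
        _ ≤ (M + 1) * ((j : ℝ) + 1) := by nlinarith [Nat.cast_nonneg (α := ℝ) j]
    have hrw : (M + 1) ^ n * ∏ j ∈ Finset.range n, ((j : ℝ) + 1)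
        = ∏ j ∈ Finset.range n, ((M + 1) * ((j : ℝ) + 1)) := by
      rw [Finset.prod_mul_distrib, Finset.prod_const, Finset.card_range]
    rw [habs, hfac, hrw]
    exact Finset.prod_le_prod (fun j _ => norm_nonneg _) (fun j _ => hup j)
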